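/- Let f, g_1, …, g_s ∈ ℝ[x_1, …, x_n] and γ ∈ ℝ. Then f − γ belongs to the linear cone M_KKT ⊆ ℝ[x, λ, ν] (built from the orthant constraints h_k = x_k, k = 1, …, n) if and only if f − γ belongs to the reduced linear cone M^{ℝ^n_+}_KKT ⊆ ℝ[x, λ]. Equivalently, f − γ ∈ M_{N_1,KKT} for some N_1 ∈ ℕ if and only if f − γ ∈ M^{ℝ^n_+}_{N_2,KKT} for some N_2 ∈ ℕ, so the reduced SOS relaxations have the same convergence properties as the full ones. -/

import Mathlib

open MvPolynomial

noncomputable section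

/-- Variables `x_1,…,x_n, λ_1,…,λ_s, ν_1,…,ν_n` of the full KKT formulation for the
orthant constraints `h_k = x_k`. -/
abbrev AVar (n s : ℕ) := Sum (Fin n) (Sum (Fin s) (Fin n))

/-- The full ring `ℝ[x, λ, ν]`. -/
abbrev APoly (n s : ℕ) := MvPolynomial (AVar n s) ℝ

/-- Variables `x_1,…,x_n, λ_1,…,λ_s` of the reduced formulation. -/
abbrev BVar (n s : ℕ) := Sum (Fin n) (Fin s)

/-- The reduced ring `ℝ[x, λ]`. -/
abbrev BPoly (n s : ℕ) := MvPolynomial (BVar n s) ℝ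

/-- Lift `ℝ[x]` into `ℝ[x, λ, ν]`. -/
def liftA (n s : ℕ) (p : MvPolynomial (Fin n) ℝ) : APoly n s := rename Sum.inl p

/-- Lift `ℝ[x]` into `ℝ[x, λ]`. -/
def liftB (n s : ℕ) (p : MvPolynomial (Fin n) ℝ) : BPoly n s := rename Sum.inl p

/-- A real polynomial is SOS if it is a finite sum of squares of real polynomials. -/
def IsSOS {σ : Type*} (p : MvPolynomial σ ℝ) : Prop :=
  ∃ (m : ℕ) (q : Fin m → MvPolynomial σ ℝ), p = ∑ i, (q i) ^ 2

/-- `F_k = ∂f/∂x_k + Σ_i λ_i ∂g_i/∂x_k − ν_k`. -/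
def FA (n s : ℕ) (f : MvPolynomial (Fin n) ℝ) (g : Fin s → MvPolynomial (Fin n) ℝ)
    (k : Fin n) : APoly n s :=
  liftA n s (pderiv k f)
    + ∑ i, X (Sum.inr (Sum.inl i)) * liftA n s (pderiv k (g i))
    - X (Sum.inr (Sum.inr k))

/-- The full KKT ideal `I_KKT = ⟨F_1,…,F_n, g_1,…,g_s, ν_1 x_1,…,ν_n x_n⟩`. -/
def IA (n s : ℕ) (f : MvPolynomial (Fin n) ℝ) (g : Fin s → MvPolynomial (Fin n) ℝ) :
    Ideal (APoly n s) :=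
  Ideal.span (Set.range (FA n s f g) ∪ Set.range (fun i => liftA n s (g i))
    ∪ Set.range (fun k : Fin n =>
        (X (Sum.inr (Sum.inr k)) : APoly n s) * X (Sum.inl k)))

/-- The full linear cone `M_KKT = {σ_0 + Σ_k σ_k x_k : σ's SOS} + I_KKT`. -/
def MA (n s : ℕ) (f : MvPolynomial (Fin n) ℝ) (g : Fin s → MvPolynomial (Fin n) ℝ) :
    Set (APoly n s) :=
  {p | ∃ (σ0 : APoly n s) (σ : Fin n → APoly n s),
    IsSOS σ0 ∧ (∀ k, IsSOS (σ k)) ∧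
    ∃ q ∈ IA n s f g, p = σ0 + (∑ k, σ k * X (Sum.inl k)) + q}

/-- The truncated full KKT ideal `I_{N,KKT}`. -/
def IATrunc (n s : ℕ) (f : MvPolynomial (Fin n) ℝ) (g : Fin s → MvPolynomial (Fin n) ℝ)
    (N : ℕ) : Set (APoly n s) :=
  {p | ∃ (φ : Fin n → APoly n s) (ψ : Fin s → APoly n s) (χ : Fin n → APoly n s),
    (∀ k, (φ k * FA n s f g k).totalDegree ≤ N) ∧
    (∀ i, (ψ i * liftA n s (g i)).totalDegree ≤ N) ∧
    (∀ k, (χ k * ((X (Sum.inr (Sum.inr k)) : APoly n s) * X (Sum.inl k))).totalDegree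
      ≤ N) ∧
    p = (∑ k, φ k * FA n s f g k) + (∑ i, ψ i * liftA n s (g i))
      + (∑ k, χ k * ((X (Sum.inr (Sum.inr k)) : APoly n s) * X (Sum.inl k)))}

/-- The truncated full linear cone `M_{N,KKT}`. -/
def MATrunc (n s : ℕ) (f : MvPolynomial (Fin n) ℝ) (g : Fin s → MvPolynomial (Fin n) ℝ)
    (N : ℕ) : Set (APoly n s) :=
  {p | ∃ (σ0 : APoly n s) (σ : Fin n → APoly n s),
    IsSOS σ0 ∧ (∀ k, IsSOS (σ k)) ∧
    σ0.totalDegree ≤ N ∧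
    (∀ k, (σ k * (X (Sum.inl k) : APoly n s)).totalDegree ≤ N) ∧
    ∃ q ∈ IATrunc n s f g N, p = σ0 + (∑ k, σ k * X (Sum.inl k)) + q}

/-- The generators `x_k (∂f/∂x_k + Σ_i λ_i ∂g_i/∂x_k)` of the reduced KKT ideal. -/
def GB (n s : ℕ) (f : MvPolynomial (Fin n) ℝ) (g : Fin s → MvPolynomial (Fin n) ℝ)
    (k : Fin n) : BPoly n s :=
  X (Sum.inl k) *
    (liftB n s (pderiv k f) + ∑ i, X (Sum.inr i) * liftB n s (pderiv k (g i)))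

/-- The reduced KKT ideal `I^{ℝ^n_+}_KKT ⊆ ℝ[x, λ]`. -/
def IB (n s : ℕ) (f : MvPolynomial (Fin n) ℝ) (g : Fin s → MvPolynomial (Fin n) ℝ) :
    Ideal (BPoly n s) :=
  Ideal.span (Set.range (GB n s f g) ∪ Set.range (fun i => liftB n s (g i)))

/-- The reduced linear cone `M^{ℝ^n_+}_KKT = {σ_0 + Σ_k σ_k x_k : σ's SOS} + I^{ℝ^n_+}_KKT`. -/
def MB (n s : ℕ) (f : MvPolynomial (Fin n) ℝ) (g : Fin s → MvPolynomial (Fin n) ℝ) :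
    Set (BPoly n s) :=
  {p | ∃ (σ0 : BPoly n s) (σ : Fin n → BPoly n s),
    IsSOS σ0 ∧ (∀ k, IsSOS (σ k)) ∧
    ∃ q ∈ IB n s f g, p = σ0 + (∑ k, σ k * X (Sum.inl k)) + q}

/-- The truncated reduced KKT ideal `I^{ℝ^n_+}_{N,KKT}`. -/
def IBTrunc (n s : ℕ) (f : MvPolynomial (Fin n) ℝ) (g : Fin s → MvPolynomial (Fin n) ℝ)
    (N : ℕ) : Set (BPoly n s) :=
  {p | ∃ (φ : Fin n → BPoly n s) (ψ : Fin s → BPoly n s),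
    (∀ k, (φ k * GB n s f g k).totalDegree ≤ N) ∧
    (∀ i, (ψ i * liftB n s (g i)).totalDegree ≤ N) ∧
    p = (∑ k, φ k * GB n s f g k) + (∑ i, ψ i * liftB n s (g i))}

/-- The truncated reduced linear cone `M^{ℝ^n_+}_{N,KKT}`. -/
def MBTrunc (n s : ℕ) (f : MvPolynomial (Fin n) ℝ) (g : Fin s → MvPolynomial (Fin n) ℝ)
    (N : ℕ) : Set (BPoly n s) :=
  {p | ∃ (σ0 : BPoly n s) (σ : Fin n → BPoly n s),
    IsSOS σ0 ∧ (∀ k, IsSOS (σ k)) ∧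
    σ0.totalDegree ≤ N ∧
    (∀ k, (σ k * (X (Sum.inl k) : BPoly n s)).totalDegree ≤ N) ∧
    ∃ q ∈ IBTrunc n s f g N, p = σ0 + (∑ k, σ k * X (Sum.inl k)) + q}

namespace Stmt16
variable (n s : ℕ) (f : MvPolynomial (Fin n) ℝ) (g : Fin s → MvPolynomial (Fin n) ℝ)
def L (k : Fin n) : BPoly n s :=
  liftB n s (pderiv k f) + ∑ i, X (Sum.inr i) * liftB n s (pderiv k (g i))
def piVar : AVar n s → BPoly n s
  | Sum.inl k => X (Sum.inl k)
  | Sum.inr (Sum.inl i) => X (Sum.inr i)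
  | Sum.inr (Sum.inr k) => L n s f g k
def piHom : APoly n s →ₐ[ℝ] BPoly n s := aeval (piVar n s f g)
lemma pi_liftA (p : MvPolynomial (Fin n) ℝ) :
    piHom n s f g (liftA n s p) = liftB n s p := by
  show aeval _ (rename Sum.inl p) = _
  rw [aeval_rename]
  induction p using MvPolynomial.induction_on <;> simp_all [liftB, piVar]
lemma pi_X (v : AVar n s) : piHom n s f g (X v) = piVar n s f g v := aeval_X _ _
lemma pi_FA (k : Fin n) : piHom n s f g (FA n s f g k) = 0 := by
  simp only [FA, map_sub, map_add, map_sum, map_mul, pi_liftA, pi_X]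
  simp [piVar, L]
lemma pi_gen3 (k : Fin n) :
    piHom n s f g ((X (Sum.inr (Sum.inr k)) : APoly n s) * X (Sum.inl k)) = GB n s f g k := by
  simp only [map_mul, pi_X, GB, piVar, L]
  ring

def iotaHom : BPoly n s →ₐ[ℝ] APoly n s := rename (Sum.map id Sum.inl)

lemma iota_liftB (p : MvPolynomial (Fin n) ℝ) :
    iotaHom n s (liftB n s p) = liftA n s p := by
  show rename _ (rename Sum.inl p) = _
  rw [rename_rename]; rfl

lemma iota_X_inl (k : Fin n) :
    iotaHom n s (X (Sum.inl k) : BPoly n s) = X (Sum.inl k) := by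
  show rename _ _ = _; rw [rename_X]; rfl

lemma iota_X_inr (i : Fin s) :
    iotaHom n s (X (Sum.inr i) : BPoly n s) = X (Sum.inr (Sum.inl i)) := by
  show rename _ _ = _; rw [rename_X]; rfl

lemma iota_GB (k : Fin n) :
    iotaHom n s (GB n s f g k)
      = X (Sum.inl k) * FA n s f g k
        + (X (Sum.inr (Sum.inr k)) : APoly n s) * X (Sum.inl k) := by
  simp only [GB, map_mul, map_add, map_sum, iota_X_inl, iota_X_inr, iota_liftB, FA]
  ring

lemma pi_mem_IB {q : APoly n s} (hq : q ∈ IA n s f g) :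
    piHom n s f g q ∈ IB n s f g := by
  have hle : (IA n s f g).map (piHom n s f g).toRingHom ≤ IB n s f g := by
    rw [IA, Ideal.map_span, Ideal.span_le]
    rintro p ⟨p', hp', rfl⟩
    rcases hp' with (⟨k, rfl⟩ | ⟨i, rfl⟩) | ⟨k, rfl⟩
    · show piHom n s f g _ ∈ _
      rw [pi_FA]; exact (IB n s f g).zero_mem
    · show piHom n s f g _ ∈ _
      rw [pi_liftA]
      exact Ideal.subset_span (Or.inr ⟨i, rfl⟩)
    · show piHom n s f g _ ∈ _
      rw [pi_gen3]
      exact Ideal.subset_span (Or.inl ⟨k, rfl⟩)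
  exact hle (Ideal.mem_map_of_mem _ hq)

lemma iota_mem_IA {q : BPoly n s} (hq : q ∈ IB n s f g) :
    iotaHom n s q ∈ IA n s f g := by
  have hle : (IB n s f g).map (iotaHom n s).toRingHom ≤ IA n s f g := by
    rw [IB, Ideal.map_span, Ideal.span_le]
    rintro p ⟨p', hp', rfl⟩
    rcases hp' with ⟨k, rfl⟩ | ⟨i, rfl⟩
    · show iotaHom n s _ ∈ _
      rw [iota_GB]
      refine Ideal.add_mem _ (Ideal.mul_mem_left _ _ ?_) ?_
      · exact Ideal.subset_span (Or.inl (Or.inl ⟨k, rfl⟩))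
      · exact Ideal.subset_span (Or.inr ⟨k, rfl⟩)
    · show iotaHom n s _ ∈ _
      rw [iota_liftB]
      exact Ideal.subset_span (Or.inl (Or.inr ⟨i, rfl⟩))
  exact hle (Ideal.mem_map_of_mem _ hq)

lemma isSOS_map {σ τ : Type*} (F : MvPolynomial σ ℝ →ₐ[ℝ] MvPolynomial τ ℝ)
    {p : MvPolynomial σ ℝ} (hp : IsSOS p) : IsSOS (F p) := by
  obtain ⟨m, q, rfl⟩ := hp
  exact ⟨m, fun i => F (q i), by simp [map_sum]⟩

lemma MA_to_MB {p : MvPolynomial (Fin n) ℝ} (h : liftA n s p ∈ MA n s f g) :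
    liftB n s p ∈ MB n s f g := by
  obtain ⟨σ0, σ, h0, hk, q, hq, heq⟩ := h
  refine ⟨piHom n s f g σ0, fun k => piHom n s f g (σ k), isSOS_map _ h0,
    fun k => isSOS_map _ (hk k), piHom n s f g q, pi_mem_IB n s f g hq, ?_⟩
  have := congrArg (piHom n s f g) heq
  rw [pi_liftA] at this
  simpa only [map_add, map_sum, map_mul, pi_X, piVar] using this

lemma MB_to_MA {p : MvPolynomial (Fin n) ℝ} (h : liftB n s p ∈ MB n s f g) :
    liftA n s p ∈ MA n s f g := by
  obtain ⟨σ0, σ, h0, hk, q, hq, heq⟩ := h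
  refine ⟨iotaHom n s σ0, fun k => iotaHom n s (σ k), isSOS_map _ h0,
    fun k => isSOS_map _ (hk k), iotaHom n s q, iota_mem_IA n s f g hq, ?_⟩
  have := congrArg (iotaHom n s) heq
  rw [iota_liftB] at this
  simpa only [map_add, map_sum, map_mul, iota_X_inl] using this

lemma MATrunc_subset_MA (N : ℕ) : MATrunc n s f g N ⊆ MA n s f g := by
  rintro p ⟨σ0, σ, h0, hk, -, -, q, ⟨φ, ψ, χ, -, -, -, rfl⟩, heq⟩
  refine ⟨σ0, σ, h0, hk, _, ?_, heq⟩
  refine Ideal.add_mem _ (Ideal.add_mem _ ?_ ?_) ?_ <;>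
    refine Ideal.sum_mem _ fun j _ => Ideal.mul_mem_left _ _ (Ideal.subset_span ?_)
  · exact Or.inl (Or.inl ⟨j, rfl⟩)
  · exact Or.inl (Or.inr ⟨j, rfl⟩)
  · exact Or.inr ⟨j, rfl⟩

lemma MBTrunc_subset_MB (N : ℕ) : MBTrunc n s f g N ⊆ MB n s f g := by
  rintro p ⟨σ0, σ, h0, hk, -, -, q, ⟨φ, ψ, -, -, rfl⟩, heq⟩
  refine ⟨σ0, σ, h0, hk, _, ?_, heq⟩
  refine Ideal.add_mem _ ?_ ?_ <;>
    refine Ideal.sum_mem _ fun j _ => Ideal.mul_mem_left _ _ (Ideal.subset_span ?_)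
  · exact Or.inl ⟨j, rfl⟩
  · exact Or.inr ⟨j, rfl⟩

lemma exists_MATrunc_of_MA {p : APoly n s} (h : p ∈ MA n s f g) :
    ∃ N, p ∈ MATrunc n s f g N := by
  obtain ⟨σ0, σ, h0, hk, q, hq, heq⟩ := h
  rw [IA, show Set.range (FA n s f g) ∪ Set.range (fun i => liftA n s (g i))
        ∪ Set.range (fun k : Fin n =>
          (X (Sum.inr (Sum.inr k)) : APoly n s) * X (Sum.inl k))
      = Set.range (Sum.elim (FA n s f g) (Sum.elim (fun i => liftA n s (g i))
          (fun k : Fin n => (X (Sum.inr (Sum.inr k)) : APoly n s) * X (Sum.inl k))))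
    from by rw [Set.Sum.elim_range, Set.Sum.elim_range, Set.union_assoc],
    ← Ideal.submodule_span_eq] at hq
  obtain ⟨c, hc⟩ := (Submodule.mem_span_range_iff_exists_fun _).mp hq
  set φ : Fin n → APoly n s := fun k => c (Sum.inl k) with hφ
  set ψ : Fin s → APoly n s := fun i => c (Sum.inr (Sum.inl i)) with hψ
  set χ : Fin n → APoly n s := fun k => c (Sum.inr (Sum.inr k)) with hχ
  have hqeq : q = (∑ k, φ k * FA n s f g k) + (∑ i, ψ i * liftA n s (g i))
      + (∑ k, χ k * ((X (Sum.inr (Sum.inr k)) : APoly n s) * X (Sum.inl k))) := by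
    rw [← hc, Fintype.sum_sum_type, Fintype.sum_sum_type, add_assoc]
    simp [smul_eq_mul]
    rfl
  set N : ℕ := σ0.totalDegree
      ⊔ (Finset.univ.sup fun k => (σ k * (X (Sum.inl k) : APoly n s)).totalDegree)
      ⊔ (Finset.univ.sup fun k => (φ k * FA n s f g k).totalDegree)
      ⊔ (Finset.univ.sup fun i => (ψ i * liftA n s (g i)).totalDegree)
      ⊔ (Finset.univ.sup fun k => (χ k *
          ((X (Sum.inr (Sum.inr k)) : APoly n s) * X (Sum.inl k))).totalDegree) with hN
  refine ⟨N, σ0, σ, h0, hk, ?_, ?_, q, ⟨φ, ψ, χ, ?_, ?_, ?_, hqeq⟩, heq⟩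
  · exact le_sup_of_le_left (le_sup_of_le_left (le_sup_of_le_left (le_sup_of_le_left le_rfl)))
  · intro k
    refine le_sup_of_le_left (le_sup_of_le_left (le_sup_of_le_left (le_sup_of_le_right ?_)))
    apply Finset.le_sup (Finset.mem_univ k)
  · intro k
    refine le_sup_of_le_left (le_sup_of_le_left (le_sup_of_le_right ?_))
    apply Finset.le_sup (Finset.mem_univ k)
  · intro i
    refine le_sup_of_le_left (le_sup_of_le_right ?_)
    apply Finset.le_sup (Finset.mem_univ i)
  · intro k
    refine le_sup_of_le_right ?_
    apply Finset.le_sup (Finset.mem_univ k)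

lemma exists_MBTrunc_of_MB {p : BPoly n s} (h : p ∈ MB n s f g) :
    ∃ N, p ∈ MBTrunc n s f g N := by
  obtain ⟨σ0, σ, h0, hk, q, hq, heq⟩ := h
  rw [IB, show Set.range (GB n s f g) ∪ Set.range (fun i => liftB n s (g i))
      = Set.range (Sum.elim (GB n s f g) (fun i => liftB n s (g i)))
    from by rw [Set.Sum.elim_range], ← Ideal.submodule_span_eq] at hq
  obtain ⟨c, hc⟩ := (Submodule.mem_span_range_iff_exists_fun _).mp hq
  set φ : Fin n → BPoly n s := fun k => c (Sum.inl k) with hφ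
  set ψ : Fin s → BPoly n s := fun i => c (Sum.inr i) with hψ
  have hqeq : q = (∑ k, φ k * GB n s f g k) + (∑ i, ψ i * liftB n s (g i)) := by
    rw [← hc, Fintype.sum_sum_type]
    simp [smul_eq_mul]
    rfl
  set N : ℕ := σ0.totalDegree
      ⊔ (Finset.univ.sup fun k => (σ k * (X (Sum.inl k) : BPoly n s)).totalDegree)
      ⊔ (Finset.univ.sup fun k => (φ k * GB n s f g k).totalDegree)
      ⊔ (Finset.univ.sup fun i => (ψ i * liftB n s (g i)).totalDegree) with hN
  refine ⟨N, σ0, σ, h0, hk, ?_, ?_, q, ⟨φ, ψ, ?_, ?_, hqeq⟩, heq⟩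
  · exact le_sup_of_le_left (le_sup_of_le_left (le_sup_of_le_left le_rfl))
  · intro k
    refine le_sup_of_le_left (le_sup_of_le_left (le_sup_of_le_right ?_))
    apply Finset.le_sup (Finset.mem_univ k)
  · intro k
    refine le_sup_of_le_left (le_sup_of_le_right ?_)
    apply Finset.le_sup (Finset.mem_univ k)
  · intro i
    refine le_sup_of_le_right ?_
    apply Finset.le_sup (Finset.mem_univ i)

end Stmt16

/-- For the orthant constraints `h_k = x_k`, the full and reduced
linear-cone SOS relaxations are equivalent: `f − γ ∈ M_KKT ⊆ ℝ[x,λ,ν]` if and only if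
`f − γ ∈ M^{ℝ^n_+}_KKT ⊆ ℝ[x,λ]`, and `f − γ ∈ M_{N₁,KKT}` for some `N₁` if and only if
`f − γ ∈ M^{ℝ^n_+}_{N₂,KKT}` for some `N₂`. -/
theorem stmt16 (n s : ℕ) (f : MvPolynomial (Fin n) ℝ)
    (g : Fin s → MvPolynomial (Fin n) ℝ) (γ : ℝ) :
    (liftA n s (f - C γ) ∈ MA n s f g ↔ liftB n s (f - C γ) ∈ MB n s f g) ∧
    ((∃ N1 : ℕ, liftA n s (f - C γ) ∈ MATrunc n s f g N1) ↔
      (∃ N2 : ℕ, liftB n s (f - C γ) ∈ MBTrunc n s f g N2)) := by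
  refine ⟨⟨Stmt16.MA_to_MB n s f g, Stmt16.MB_to_MA n s f g⟩, ?_, ?_⟩
  · rintro ⟨N1, h⟩
    exact Stmt16.exists_MBTrunc_of_MB n s f g
      (Stmt16.MA_to_MB n s f g (Stmt16.MATrunc_subset_MA n s f g N1 h))
  · rintro ⟨N2, h⟩
    exact Stmt16.exists_MATrunc_of_MA n s f g
      (Stmt16.MB_to_MA n s f g (Stmt16.MBTrunc_subset_MB n s f g N2 h))

end
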